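/- Let σ be a permutation of Fin 4 and let f be the ℤ-linear endomorphism of the free ℤ-module with basis H, E₁,…,E₄ defined by f(H) = 3H − 2(E₁+E₂+E₃+E₄) and f(Eᵢ) = H − Σ_{j ≠ i} E_{σ(j)}. Then f is an automorphism of finite order, and its order equals lcm(2, ord(σ)), where ord(σ) is the order of σ; in particular the order of f belongs to {2, 4, 6}. -/

import Mathlib

noncomputable section

/-- Index type for the basis `H, E₁,…,E₄`. -/
abbrev IdxB := Unit ⊕ Fin 4

/-- The free ℤ-module with basis `H, E₁,…,E₄`. -/
abbrev ModB := IdxB → ℤ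

/-- The basis vector `H` (pullback of the hyperplane class). -/
def Hc : ModB := Pi.single (Sum.inl ()) 1

/-- The basis vectors `Eᵢ` (exceptional divisors over the coordinate points). -/
def Ec (i : Fin 4) : ModB := Pi.single (Sum.inr i) 1

/-- The permutation operator on `ModB` permuting the `E`-coordinates. -/
def Tperm : Equiv.Perm (Fin 4) →* Module.End ℤ ModB where
  toFun τ := LinearMap.funLeft ℤ ℤ (Sum.map id ⇑τ⁻¹)
  map_one' := by
    apply LinearMap.ext; intro v; funext x
    cases x <;> simp [LinearMap.funLeft_apply]
  map_mul' τ₁ τ₂ := by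
    apply LinearMap.ext; intro v; funext x
    cases x <;> simp [LinearMap.funLeft_apply, Module.End.mul_apply]

lemma Tperm_Hc (τ : Equiv.Perm (Fin 4)) : Tperm τ Hc = Hc := by
  funext x
  cases x <;> simp [Tperm, LinearMap.funLeft_apply, Hc]

lemma Tperm_Ec (τ : Equiv.Perm (Fin 4)) (i : Fin 4) : Tperm τ (Ec i) = Ec (τ i) := by
  funext x
  rcases x with x | j
  · simp [Tperm, LinearMap.funLeft_apply, Ec]
  · simp only [Tperm, MonoidHom.coe_mk, OneHom.coe_mk, LinearMap.funLeft_apply, Sum.map_inr, Ec]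
    rw [Pi.single_apply, Pi.single_apply]
    simp only [Sum.inr.injEq, Equiv.Perm.inv_def, Equiv.symm_apply_eq]

set_option maxRecDepth 10000 in
lemma perm4_pow : ∀ τ : Equiv.Perm (Fin 4), τ ^ 4 = 1 ∨ τ ^ 6 = 1 := by decide

lemma Ec_inj : Function.Injective Ec := by
  intro a b h
  have := congrFun h (Sum.inr a)
  simp [Ec, Pi.single_apply] at this
  by_contra hab
  exact hab this

/-- The action on cohomology of a map `Φ = g∘crem₃` with `g` of type (B) is an
automorphism of finite order, equal to `lcm(2, ord σ)`; in particular its order belongs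
to `{2, 4, 6}`. -/
theorem typeB_order (σ : Equiv.Perm (Fin 4)) (f : Module.End ℤ ModB)
    (hH : f Hc = 3 • Hc - 2 • ∑ j : Fin 4, Ec j)
    (hE : ∀ i : Fin 4, f (Ec i) = Hc - ∑ j ∈ Finset.univ.filter (· ≠ i), Ec (σ j)) :
    IsUnit f ∧ orderOf f = Nat.lcm 2 (orderOf σ) ∧ orderOf f ∈ ({2, 4, 6} : Set ℕ) := by
  set S : ModB := ∑ j : Fin 4, Ec j with hS
  have hσsum : ∀ τ : Equiv.Perm (Fin 4), ∑ j : Fin 4, Ec (τ j) = S := by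
    intro τ; rw [hS]; exact Equiv.sum_comp τ Ec
  have hE' : ∀ i : Fin 4, f (Ec i) = Hc - S + Ec (σ i) := by
    intro i
    rw [hE i, Finset.filter_ne', Finset.sum_erase_eq_sub (Finset.mem_univ i), hσsum σ]
    abel
  have hfS : f S = 4 • Hc - 4 • S + S := by
    rw [hS, map_sum]
    simp_rw [hE']
    rw [Finset.sum_add_distrib, Finset.sum_sub_distrib, Finset.sum_const, Finset.sum_const,
      hσsum σ]
    simp [← hS]
  have hf2H : f (f Hc) = Hc := by
    rw [hH, map_sub, map_nsmul, map_nsmul, hH, hfS]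
    module
  have hf2E : ∀ i : Fin 4, f (f (Ec i)) = Ec (σ (σ i)) := by
    intro i
    rw [hE' i, map_add, map_sub, hH, hfS, hE' (σ i)]
    module
  -- f^2 equals the permutation operator of σ^2
  have hf2 : f ^ 2 = Tperm (σ ^ 2) := by
    apply (Pi.basisFun ℤ IdxB).ext
    intro x
    rcases x with x | i
    · rw [Pi.basisFun_apply]
      have hx : (Pi.single (Sum.inl x) 1 : ModB) = Hc := by cases x; rfl
      rw [hx, pow_two, Module.End.mul_apply, hf2H, Tperm_Hc]
    · rw [Pi.basisFun_apply]
      have hx : (Pi.single (Sum.inr i) 1 : ModB) = Ec i := rfl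
      rw [hx, pow_two, Module.End.mul_apply, hf2E, Tperm_Ec]
      simp [pow_two]
  have heven : ∀ k : ℕ, f ^ (2 * k) = Tperm (σ ^ (2 * k)) := by
    intro k
    rw [pow_mul, hf2, ← map_pow, ← pow_mul]
  set d := orderOf σ with hd
  have hdpos : 0 < d := orderOf_pos σ
  set m := Nat.lcm 2 d with hm
  have h2m : 2 ∣ m := Nat.dvd_lcm_left _ _
  have hdm : d ∣ m := Nat.dvd_lcm_right _ _
  have hmpos : 0 < m := Nat.pos_of_ne_zero (Nat.lcm_ne_zero (by norm_num) hdpos.ne')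
  have hfm : f ^ m = 1 := by
    obtain ⟨k, hk⟩ := h2m
    rw [hk, heven k, ← hk]
    have hσm : σ ^ m = 1 := orderOf_dvd_iff_pow_eq_one.mp hdm
    rw [hσm, map_one]
  have hunit : IsUnit f := IsUnit.of_pow_eq_one hfm hmpos.ne'
  have hnm : orderOf f ∣ m := orderOf_dvd_of_pow_eq_one hfm
  set n := orderOf f with hn
  have hfn : f ^ n = 1 := by rw [hn]; exact pow_orderOf_eq_one f
  -- n is even
  have h2n : 2 ∣ n := by
    rcases Nat.even_or_odd n with he | ho
    · exact he.two_dvd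
    · exfalso
      obtain ⟨k, hk⟩ := ho
      have hsplit : f ^ n = f ^ (2 * k) * f := by rw [hk, pow_succ]
      have hHc : Hc = f Hc := by
        have h1 := congrArg (fun g : Module.End ℤ ModB => g Hc) hfn
        simp only [Module.End.one_apply] at h1
        have hTS : Tperm (σ ^ (2 * k)) S = S := by
          rw [hS, map_sum]
          simp_rw [Tperm_Ec]
          exact hσsum _
        have h3 : (f ^ n) Hc = f Hc := by
          rw [hsplit, Module.End.mul_apply, heven k, hH, map_sub, map_nsmul, map_nsmul,
            Tperm_Hc, hTS]
        exact h1.symm.trans h3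
      have h2 := congrFun hHc (Sum.inl ())
      rw [hH] at h2
      simp [Hc, hS, Ec, Fin.sum_univ_four] at h2
  -- d divides n
  have hdn : d ∣ n := by
    obtain ⟨k, hk⟩ := h2n
    have h1 : Tperm (σ ^ n) = 1 := by rw [hk, ← heven k, ← hk, hfn]
    have hσn : σ ^ n = 1 := by
      have hpt : ∀ i, (σ ^ n) i = i := by
        intro i
        have h2 := congrArg (fun g : Module.End ℤ ModB => g (Ec i)) h1
        simp only [Module.End.one_apply, Tperm_Ec] at h2
        exact Ec_inj h2
      exact Equiv.ext fun i => by simp [hpt i]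
    exact orderOf_dvd_iff_pow_eq_one.mpr hσn
  have hord : n = m := Nat.dvd_antisymm hnm (Nat.lcm_dvd h2n hdn)
  refine ⟨hunit, hord, ?_⟩
  -- membership in {2,4,6}
  have h46 : σ ^ 4 = 1 ∨ σ ^ 6 = 1 := by
    exact perm4_pow σ
  have hdvd : m ∣ 4 ∨ m ∣ 6 := by
    rcases h46 with h | h
    · exact Or.inl (Nat.lcm_dvd (by norm_num) (orderOf_dvd_iff_pow_eq_one.mpr h))
    · exact Or.inr (Nat.lcm_dvd (by norm_num) (orderOf_dvd_iff_pow_eq_one.mpr h))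
  have hle : m ≤ 6 := by
    rcases hdvd with h | h
    · exact le_trans (Nat.le_of_dvd (by norm_num) h) (by norm_num)
    · exact Nat.le_of_dvd (by norm_num) h
  rw [hord]
  simp only [Set.mem_insert_iff, Set.mem_singleton_iff]
  interval_cases m <;> omega
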